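/- Let N be a positive integer, let H be an N×N Hermitian complex matrix, and let v_1, v_2 ∈ ℂ^N be unit vectors with H v_1 = e_1 v_1 and H v_2 = e_2 v_2 for real numbers e_1, e_2. Let ρ be an N×N positive semidefinite complex matrix with trace 1 (a density matrix), let σ > 0, let g(t) = (2πσ²)^{−1/2}·exp(−t²/(2σ²)), and define ω := ∫_ℝ g(t) · exp(−itH) ρ exp(itH) dt. Then |⟨v_1, ω v_2⟩| ≤ exp(−σ²(e_1−e_2)²/2). -/

import Mathlib

open scoped BigOperators Matrix ComplexOrder

/-- The centered Gaussian probability density with variance `σ²`: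
`g(t) = (2πσ²)^{-1/2} exp(-t²/(2σ²))`. -/
noncomputable def gaussDensity (σ t : ℝ) : ℝ :=
  (Real.sqrt (2 * Real.pi * σ ^ 2))⁻¹ * Real.exp (-t ^ 2 / (2 * σ ^ 2))

/-- The Gaussian time-average `ω = ∫ g(t) exp(-itH) ρ exp(itH) dt`, defined as an
entrywise Bochner integral (each entry is a `ℂ`-valued Bochner integral). -/
noncomputable def gaussTimeAverage {N : ℕ} (σ : ℝ) (H ρ : Matrix (Fin N) (Fin N) ℂ) :
    Matrix (Fin N) (Fin N) ℂ :=
  Matrix.of fun i j => ∫ t : ℝ, (gaussDensity σ t : ℂ) *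
    ((NormedSpace.exp ((-(Complex.I * (t : ℂ))) • H) * ρ *
        NormedSpace.exp ((Complex.I * (t : ℂ)) • H)) i j)


open MeasureTheory Complex

lemma norm_exp_le_exp_norm' {𝔸 : Type*} [NormedRing 𝔸] [NormedAlgebra ℂ 𝔸] [CompleteSpace 𝔸]
    [NormOneClass 𝔸] (x : 𝔸) : ‖NormedSpace.exp x‖ ≤ Real.exp ‖x‖ := by
  rw [NormedSpace.exp_eq_tsum ℂ]
  refine (norm_tsum_le_tsum_norm (NormedSpace.norm_expSeries_summable' x)).trans ?_
  rw [Real.exp_eq_exp_ℝ, NormedSpace.exp_eq_tsum ℝ]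
  refine Summable.tsum_le_tsum (fun n => ?_) (NormedSpace.norm_expSeries_summable' x) ?_
  · rw [norm_smul, smul_eq_mul]
    have h1 : ‖((n.factorial : ℂ))⁻¹‖ = ((n.factorial : ℝ))⁻¹ := by
      simp [norm_inv]
    rw [h1]
    gcongr
    exact norm_pow_le x n
  · simpa only [smul_eq_mul] using NormedSpace.expSeries_summable' (𝕂 := ℝ) (𝔸 := ℝ) ‖x‖

lemma expMulVec {N : ℕ} (M : Matrix (Fin N) (Fin N) ℂ) (v : Fin N → ℂ) (μ : ℂ)
    (h : M.mulVec v = μ • v) :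
    (NormedSpace.exp M).mulVec v = Complex.exp μ • v := by
  letI : NormedRing (Matrix (Fin N) (Fin N) ℂ) := Matrix.linftyOpNormedRing
  letI : NormedAlgebra ℂ (Matrix (Fin N) (Fin N) ℂ) := Matrix.linftyOpNormedAlgebra
  have hpow : ∀ n : ℕ, (M ^ n).mulVec v = μ ^ n • v := by
    intro n
    induction n with
    | zero => simp [Matrix.one_mulVec]
    | succ n ih =>
      rw [pow_succ, ← Matrix.mulVec_mulVec, h, Matrix.mulVec_smul, ih, smul_smul, pow_succ]
      ring_nf
  let f : Matrix (Fin N) (Fin N) ℂ →ₗ[ℂ] (Fin N → ℂ) :=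
    { toFun := fun A => A.mulVec v
      map_add' := fun A B => Matrix.add_mulVec A B v
      map_smul' := fun c A => Matrix.smul_mulVec c A v }
  let F : Matrix (Fin N) (Fin N) ℂ →L[ℂ] (Fin N → ℂ) := f.toContinuousLinearMap
  have hF : ∀ A, F A = A.mulVec v := fun _ => rfl
  rw [NormedSpace.exp_eq_tsum ℂ]
  show F _ = _
  rw [F.map_tsum (NormedSpace.expSeries_summable' M)]
  have : ∀ n : ℕ, F (((n.factorial : ℂ))⁻¹ • M ^ n) = (((n.factorial : ℂ))⁻¹ * μ ^ n) • v := by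
    intro n
    rw [_root_.map_smul, hF, hpow, smul_smul]
  simp_rw [this]
  rw [Summable.tsum_smul_const]
  · congr 1
    rw [Complex.exp_eq_exp_ℂ, NormedSpace.exp_eq_tsum ℂ]
    exact tsum_congr fun n => (smul_eq_mul (α := ℂ) _ _).symm
  · simpa only [smul_eq_mul] using NormedSpace.expSeries_summable' (𝕂 := ℂ) (𝔸 := ℂ) μ

lemma integrable_gauss_entry {N : ℕ} (σ : ℝ) (hσ : 0 < σ) (H ρ : Matrix (Fin N) (Fin N) ℂ)
    (i j : Fin N) :
    Integrable (fun t : ℝ => (gaussDensity σ t : ℂ) *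
      ((NormedSpace.exp ((-(Complex.I * (t : ℂ))) • H) * ρ *
        NormedSpace.exp ((Complex.I * (t : ℂ)) • H)) i j)) := by
  haveI : Nonempty (Fin N) := ⟨i⟩
  letI : NormedRing (Matrix (Fin N) (Fin N) ℂ) := Matrix.linftyOpNormedRing
  letI : NormedAlgebra ℂ (Matrix (Fin N) (Fin N) ℂ) := Matrix.linftyOpNormedAlgebra
  letI : NormOneClass (Matrix (Fin N) (Fin N) ℂ) := Matrix.linfty_opNormOneClass
  letI : NormedAlgebra ℚ (Matrix (Fin N) (Fin N) ℂ) := Matrix.linftyOpNormedAlgebra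
  -- the matrix-valued map and its continuity
  set A : ℝ → Matrix (Fin N) (Fin N) ℂ := fun t =>
    NormedSpace.exp ((-(Complex.I * (t : ℂ))) • H) * ρ *
      NormedSpace.exp ((Complex.I * (t : ℂ)) • H) with hA
  have hcont₁ : Continuous fun t : ℝ => (Complex.I * (t : ℂ)) := by continuity
  have hcontA : Continuous A := by
    refine (((NormedSpace.exp_continuous.comp (hcont₁.neg.smul continuous_const)).mul
      continuous_const).mul (NormedSpace.exp_continuous.comp (hcont₁.smul continuous_const)))
  have hcont : Continuous fun t : ℝ => (gaussDensity σ t : ℂ) * (A t i j) := by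
    refine (Complex.continuous_ofReal.comp ?_).mul
      ((continuous_apply j).comp ((continuous_apply i).comp hcontA))
    unfold gaussDensity
    fun_prop
  -- entry bound: ‖A t i j‖ ≤ ‖ρ‖ * exp (2‖H‖ * |t|)
  have hentry : ∀ (B : Matrix (Fin N) (Fin N) ℂ), ‖B i j‖ ≤ ‖B‖ := by
    intro B
    have h1 : ‖B i j‖₊ ≤ ∑ k, ‖B i k‖₊ := by
      exact Finset.single_le_sum (f := fun k => ‖B i k‖₊) (fun k _ => zero_le)
        (Finset.mem_univ j)
    have h2 : (∑ k, ‖B i k‖₊) ≤ ‖B‖₊ := by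
      rw [Matrix.linfty_opNNNorm_def]
      exact Finset.le_sup (f := fun i => ∑ j, ‖B i j‖₊) (Finset.mem_univ i)
    exact_mod_cast h1.trans h2
  set a : ℝ := 2 * ‖H‖ with ha
  have ha0 : 0 ≤ a := by positivity
  have hAbound : ∀ t : ℝ, ‖A t i j‖ ≤ ‖ρ‖ * Real.exp (a * |t|) := by
    intro t
    refine (hentry _).trans ?_
    have h1 : ‖NormedSpace.exp ((-(Complex.I * (t : ℂ))) • H)‖ ≤ Real.exp (‖H‖ * |t|) := by
      refine (norm_exp_le_exp_norm' _).trans ?_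
      rw [norm_smul]
      simp [Complex.norm_exp, mul_comm, abs_mul]
    have h2 : ‖NormedSpace.exp ((Complex.I * (t : ℂ)) • H)‖ ≤ Real.exp (‖H‖ * |t|) := by
      refine (norm_exp_le_exp_norm' _).trans ?_
      rw [norm_smul]
      simp [mul_comm, abs_mul]
    calc ‖A t‖ ≤ ‖NormedSpace.exp ((-(Complex.I * (t : ℂ))) • H) * ρ‖ *
          ‖NormedSpace.exp ((Complex.I * (t : ℂ)) • H)‖ := norm_mul_le _ _
      _ ≤ (‖NormedSpace.exp ((-(Complex.I * (t : ℂ))) • H)‖ * ‖ρ‖) *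
          ‖NormedSpace.exp ((Complex.I * (t : ℂ)) • H)‖ := by
            gcongr; exact norm_mul_le _ _
      _ ≤ (Real.exp (‖H‖ * |t|) * ‖ρ‖) * Real.exp (‖H‖ * |t|) := by gcongr <;> positivity
      _ = ‖ρ‖ * Real.exp (a * |t|) := by
          rw [ha, two_mul, mul_comm (‖H‖ + ‖H‖) |t|, mul_add, Real.exp_add]; ring
  -- majorant
  set C : ℝ := (Real.sqrt (2 * Real.pi * σ ^ 2))⁻¹ * ‖ρ‖ with hC
  have hb : (0 : ℝ) < (((1 : ℝ) / (2 * σ ^ 2) : ℝ) : ℂ).re := by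
    simp only [Complex.ofReal_re]
    positivity
  have hmaj : Integrable (fun t : ℝ =>
      C * (Real.exp (-t ^ 2 / (2 * σ ^ 2) + a * t) +
           Real.exp (-t ^ 2 / (2 * σ ^ 2) - a * t))) := by
    refine Integrable.const_mul ?_ C
    have g1 := (integrable_cexp_quadratic hb (a : ℂ) 0).norm
    have g2 := (integrable_cexp_quadratic hb (-a : ℂ) 0).norm
    have e1 : ∀ (c : ℝ) (t : ℝ), ‖cexp (-(((1 : ℝ) / (2 * σ ^ 2) : ℝ) : ℂ) * t ^ 2 + (c : ℂ) * t + 0)‖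
        = Real.exp (-t ^ 2 / (2 * σ ^ 2) + c * t) := by
      intro c t
      have hz : (-(((1 : ℝ) / (2 * σ ^ 2) : ℝ) : ℂ) * (t : ℂ) ^ 2 + (c : ℂ) * (t : ℂ) + 0)
          = (((-t ^ 2 / (2 * σ ^ 2) + c * t : ℝ)) : ℂ) := by push_cast; ring
      rw [hz, Complex.norm_exp, Complex.ofReal_re]
    have g1' : Integrable (fun t : ℝ => Real.exp (-t ^ 2 / (2 * σ ^ 2) + a * t)) := by
      refine g1.congr ?_
      filter_upwards with t
      exact e1 a t
    have g2' : Integrable (fun t : ℝ => Real.exp (-t ^ 2 / (2 * σ ^ 2) - a * t)) := by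
      refine g2.congr ?_
      filter_upwards with t
      rw [show (-(a : ℂ)) = ((-a : ℝ) : ℂ) from by push_cast; ring, e1 (-a) t]
      ring_nf
    exact g1'.add g2'
  refine hmaj.mono' hcont.aestronglyMeasurable ?_
  filter_upwards with t
  rw [norm_mul]
  have hg0 : 0 ≤ gaussDensity σ t := by
    unfold gaussDensity; positivity
  have hgn : ‖(gaussDensity σ t : ℂ)‖ = gaussDensity σ t := by
    rw [Complex.norm_real, Real.norm_of_nonneg hg0]
  rw [hgn]
  have habs : Real.exp (a * |t|) ≤ Real.exp (a * t) + Real.exp (-(a * t)) := by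
    rcases abs_choice t with h | h
    · rw [h]; nlinarith [Real.exp_pos (-(a*t))]
    · rw [h, mul_neg]; nlinarith [Real.exp_pos (a*t)]
  calc gaussDensity σ t * ‖A t i j‖ ≤ gaussDensity σ t * (‖ρ‖ * Real.exp (a * |t|)) := by
        gcongr; exact hAbound t
    _ ≤ gaussDensity σ t * (‖ρ‖ * (Real.exp (a * t) + Real.exp (-(a * t)))) := by
        have : 0 ≤ ‖ρ‖ := norm_nonneg _
        gcongr
    _ = C * (Real.exp (-t ^ 2 / (2 * σ ^ 2) + a * t) +
           Real.exp (-t ^ 2 / (2 * σ ^ 2) - a * t)) := by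
        unfold gaussDensity
        rw [hC]
        simp only [sub_eq_add_neg, Real.exp_add]
        ring

lemma gauss_char (σ : ℝ) (hσ : 0 < σ) (ω : ℝ) :
    ∫ t : ℝ, (gaussDensity σ t : ℂ) * Complex.exp (Complex.I * (ω : ℂ) * (t : ℂ))
      = (Real.exp (-(σ ^ 2 * ω ^ 2) / 2) : ℂ) := by
  set b : ℂ := (((1 : ℝ) / (2 * σ ^ 2) : ℝ) : ℂ) with hbdef
  have hb : 0 < b.re := by rw [hbdef]; simp only [Complex.ofReal_re]; positivity
  have hσ2 : (0:ℝ) < 2 * Real.pi * σ ^ 2 := by positivity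
  have key := fourierIntegral_gaussian hb (ω : ℂ)
  have hgauss : ∀ t : ℝ, (gaussDensity σ t : ℂ) * Complex.exp (Complex.I * (ω : ℂ) * (t : ℂ))
      = ((Real.sqrt (2 * Real.pi * σ ^ 2))⁻¹ : ℂ) *
        (Complex.exp (Complex.I * (ω : ℂ) * (t : ℂ)) * Complex.exp (-b * (t : ℂ) ^ 2)) := by
    intro t
    have h1 : Complex.exp (-b * (t : ℂ) ^ 2) = ((Real.exp (-t ^ 2 / (2 * σ ^ 2)) : ℝ) : ℂ) := by
      have harg : -b * (t : ℂ) ^ 2 = ((-t ^ 2 / (2 * σ ^ 2) : ℝ) : ℂ) := by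
        rw [hbdef]; push_cast; ring
      rw [harg, ← Complex.ofReal_exp]
    rw [h1]
    unfold gaussDensity
    push_cast
    ring
  rw [MeasureTheory.integral_congr_ae (Filter.Eventually.of_forall hgauss),
    MeasureTheory.integral_const_mul, key]
  have hpb : (↑Real.pi / b) = ((2 * Real.pi * σ ^ 2 : ℝ) : ℂ) := by
    rw [hbdef]
    push_cast
    field_simp
  have hcpow : ((↑Real.pi / b) : ℂ) ^ (1/2 : ℂ) = ((Real.sqrt (2 * Real.pi * σ ^ 2) : ℝ) : ℂ) := by
    rw [hpb, Real.sqrt_eq_rpow, Complex.ofReal_cpow hσ2.le]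
    norm_num
  have hexp : -(ω : ℂ) ^ 2 / (4 * b) = ((-(σ ^ 2 * ω ^ 2) / 2 : ℝ) : ℂ) := by
    rw [hbdef]
    have : (σ : ℂ) ^ 2 ≠ 0 := by
      simpa using pow_ne_zero 2 (Complex.ofReal_ne_zero.mpr hσ.ne')
    push_cast
    field_simp
    ring
  rw [hcpow, hexp, Complex.ofReal_exp]
  rw [← mul_assoc, ← Complex.ofReal_inv, ← Complex.ofReal_mul,
    inv_mul_cancel₀ (Real.sqrt_ne_zero'.mpr hσ2)]
  simp

lemma dot_shift {N : ℕ} (M : Matrix (Fin N) (Fin N) ℂ) (x y : Fin N → ℂ) :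
    star x ⬝ᵥ (M.mulVec y) = star (Mᴴ.mulVec x) ⬝ᵥ y := by
  rw [Matrix.star_mulVec, Matrix.conjTranspose_conjTranspose, Matrix.dotProduct_mulVec]

lemma dotProduct_cs {N : ℕ} (x y : Fin N → ℂ) :
    ‖star x ⬝ᵥ y‖ ≤
      Real.sqrt (star x ⬝ᵥ x).re * Real.sqrt (star y ⬝ᵥ y).re := by
  let X : EuclideanSpace ℂ (Fin N) := (WithLp.equiv 2 _).symm x
  let Y : EuclideanSpace ℂ (Fin N) := (WithLp.equiv 2 _).symm y
  have hXY : (inner ℂ X Y : ℂ) = star x ⬝ᵥ y :=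
    (EuclideanSpace.inner_toLp_toLp x y).trans (dotProduct_comm _ _)
  have hXX : (inner ℂ X X : ℂ) = star x ⬝ᵥ x :=
    (EuclideanSpace.inner_toLp_toLp x x).trans (dotProduct_comm _ _)
  have hYY : (inner ℂ Y Y : ℂ) = star y ⬝ᵥ y :=
    (EuclideanSpace.inner_toLp_toLp y y).trans (dotProduct_comm _ _)
  calc ‖star x ⬝ᵥ y‖ = ‖(inner ℂ X Y : ℂ)‖ := by rw [hXY]
    _ ≤ ‖X‖ * ‖Y‖ := norm_inner_le_norm X Y
    _ = Real.sqrt (star x ⬝ᵥ x).re * Real.sqrt (star y ⬝ᵥ y).re := by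
        rw [norm_eq_sqrt_re_inner (𝕜 := ℂ) X, norm_eq_sqrt_re_inner (𝕜 := ℂ) Y, hXX, hYY]
        rfl

lemma quad_form_le_one {N : ℕ} (ρ : Matrix (Fin N) (Fin N) ℂ) (hρ : ρ.PosSemidef)
    (hρtr : ρ.trace = 1) (v : Fin N → ℂ) (hv : star v ⬝ᵥ v = 1) :
    (star v ⬝ᵥ ρ.mulVec v).re ≤ 1 := by
  have hH := hρ.1
  set U : Matrix (Fin N) (Fin N) ℂ := (hH.eigenvectorUnitary : Matrix (Fin N) (Fin N) ℂ) with hU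
  set lam := hH.eigenvalues with hlam
  set D : Matrix (Fin N) (Fin N) ℂ := Matrix.diagonal (RCLike.ofReal ∘ lam) with hD
  have hspec : ρ = U * D * star U := hH.spectral_theorem
  have hUU : U * star U = 1 := Matrix.mem_unitaryGroup_iff.mp hH.eigenvectorUnitary.2
  set u : Fin N → ℂ := (star U).mulVec v with hu
  have hUv : U.mulVec u = v := by
    rw [hu, Matrix.mulVec_mulVec, hUU, Matrix.one_mulVec]
  -- reduce to diagonal
  have hform : star v ⬝ᵥ ρ.mulVec v = star u ⬝ᵥ D.mulVec u := by
    rw [hspec, ← Matrix.mulVec_mulVec, ← Matrix.mulVec_mulVec, dot_shift,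
      ← Matrix.star_eq_conjTranspose, ← hu]
  -- u is a unit vector
  have hunorm : star u ⬝ᵥ u = 1 := by
    conv_lhs => rw [hu]
    rw [show (star U).mulVec v = (star U).mulVec v from rfl, ← hu, dot_shift,
      show (star U)ᴴ = U from by rw [← Matrix.star_eq_conjTranspose, star_star], hUv, hv]
  -- sum of |u i|^2 is 1
  have husq : ∑ i, Complex.normSq (u i) = 1 := by
    have h1 : star u ⬝ᵥ u = ((∑ i, Complex.normSq (u i) : ℝ) : ℂ) := by
      push_cast
      simp only [dotProduct, Pi.star_apply, RCLike.star_def]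
      exact Finset.sum_congr rfl fun i _ => by
        rw [mul_comm, Complex.mul_conj]
    rw [h1] at hunorm
    exact_mod_cast hunorm
  have husq_le : ∀ i, Complex.normSq (u i) ≤ 1 := by
    intro i
    rw [← husq]
    exact Finset.single_le_sum (f := fun i => Complex.normSq (u i))
      (fun k _ => Complex.normSq_nonneg _) (Finset.mem_univ i)
  -- sum of eigenvalues is 1
  have htr : ∑ i, lam i = 1 := by
    have h1 : ρ.trace = ∑ i, (lam i : ℂ) := by
      rw [hspec, Matrix.trace_mul_cycle,
        show star U * U = 1 from Matrix.UnitaryGroup.star_mul_self hH.eigenvectorUnitary,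
        one_mul, hD, Matrix.trace_diagonal]
      rfl
    rw [hρtr] at h1
    have := h1.symm
    rw [← Complex.ofReal_sum] at this
    exact_mod_cast this
  have hev : ∀ i, 0 ≤ lam i := hρ.eigenvalues_nonneg
  -- compute the form
  have hcomp : (star u ⬝ᵥ D.mulVec u).re = ∑ i, lam i * Complex.normSq (u i) := by
    rw [hD]
    simp only [dotProduct, Matrix.mulVec_diagonal, Pi.star_apply, RCLike.star_def]
    rw [Complex.re_sum]
    refine Finset.sum_congr rfl fun i _ => ?_
    have : (starRingEnd ℂ) (u i) * (((lam i : ℂ)) * u i) = (lam i : ℂ) * ((starRingEnd ℂ) (u i) * u i) := by ring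
    rw [show (RCLike.ofReal ∘ lam) i = ((lam i : ℝ) : ℂ) from rfl, this, mul_comm ((starRingEnd ℂ) (u i)) (u i), Complex.mul_conj]
    simp
  rw [hform, hcomp, ← htr]
  refine Finset.sum_le_sum fun i _ => ?_
  calc lam i * Complex.normSq (u i) ≤ lam i * 1 := by
        have := hev i; have := husq_le i; nlinarith
    _ = lam i := mul_one _

lemma coherence_abs_le {N : ℕ} (ρ : Matrix (Fin N) (Fin N) ℂ) (hρ : ρ.PosSemidef)
    (hρtr : ρ.trace = 1) (v₁ v₂ : Fin N → ℂ)
    (h1 : star v₁ ⬝ᵥ v₁ = 1) (h2 : star v₂ ⬝ᵥ v₂ = 1) :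
    ‖star v₁ ⬝ᵥ ρ.mulVec v₂‖ ≤ 1 := by
  open scoped MatrixOrder in
  set S := CFC.sqrt ρ with hS
  have hSH : Sᴴ = S := (Matrix.nonneg_iff_posSemidef.mp (CFC.sqrt_nonneg ρ)).1
  have hSS : S * S = ρ := CFC.sqrt_mul_sqrt_self ρ (Matrix.nonneg_iff_posSemidef.mpr hρ)
  have key : star v₁ ⬝ᵥ ρ.mulVec v₂ = star (S.mulVec v₁) ⬝ᵥ (S.mulVec v₂) := by
    rw [← hSS, ← Matrix.mulVec_mulVec, dot_shift, hSH]
  have hq : ∀ (w : Fin N → ℂ), star w ⬝ᵥ w = 1 →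
      star (S.mulVec w) ⬝ᵥ (S.mulVec w) = star w ⬝ᵥ ρ.mulVec w := by
    intro w hw
    rw [dot_shift, hSH, Matrix.mulVec_mulVec, hSS]
    conv_lhs => rw [← hρ.1]
    rw [← dot_shift]
  rw [key]
  calc ‖star (S.mulVec v₁) ⬝ᵥ (S.mulVec v₂)‖
      ≤ Real.sqrt (star (S.mulVec v₁) ⬝ᵥ (S.mulVec v₁)).re *
        Real.sqrt (star (S.mulVec v₂) ⬝ᵥ (S.mulVec v₂)).re := dotProduct_cs _ _
    _ ≤ 1 * 1 := by
        gcongr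
        · rw [show (1:ℝ) = Real.sqrt 1 from Real.sqrt_one.symm]
          refine Real.sqrt_le_sqrt ?_
          rw [hq v₁ h1]
          exact quad_form_le_one ρ hρ hρtr v₁ h1
        · rw [show (1:ℝ) = Real.sqrt 1 from Real.sqrt_one.symm]
          refine Real.sqrt_le_sqrt ?_
          rw [hq v₂ h2]
          exact quad_form_le_one ρ hρ hρtr v₂ h2
    _ = 1 := by norm_num

/-- **Weak-diagonality inequality (ineq1)/(eqCoherences) of Theorem
`TheWeakLocalDiagonality`:** if `v₁, v₂` are unit eigenvectors of a Hermitian matrix `H`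
with eigenvalues `e₁, e₂`, and `ρ` is a density matrix (positive semidefinite, trace 1),
then the Gaussian time-average `ω` of `ρ` satisfies
`|⟨v₁, ω v₂⟩| ≤ exp(-σ²(e₁-e₂)²/2)`. -/
theorem gaussTimeAverage_inner_abs_le
    (N : ℕ) (hN : 0 < N) (H ρ : Matrix (Fin N) (Fin N) ℂ) (hH : H.IsHermitian)
    (hρ : ρ.PosSemidef) (hρtr : ρ.trace = 1)
    (v₁ v₂ : Fin N → ℂ) (e₁ e₂ : ℝ)
    (hv₁unit : star v₁ ⬝ᵥ v₁ = 1) (hv₂unit : star v₂ ⬝ᵥ v₂ = 1)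
    (hv₁ : H.mulVec v₁ = (e₁ : ℂ) • v₁) (hv₂ : H.mulVec v₂ = (e₂ : ℂ) • v₂)
    (σ : ℝ) (hσ : 0 < σ) :
    ‖star v₁ ⬝ᵥ (gaussTimeAverage σ H ρ).mulVec v₂‖
      ≤ Real.exp (-(σ ^ 2 * (e₁ - e₂) ^ 2) / 2) := by
  set A : ℝ → Matrix (Fin N) (Fin N) ℂ := fun t =>
    NormedSpace.exp ((-(Complex.I * (t : ℂ))) • H) * ρ *
      NormedSpace.exp ((Complex.I * (t : ℂ)) • H) with hA
  set f : Fin N → Fin N → ℝ → ℂ := fun i j t => (gaussDensity σ t : ℂ) * (A t i j) with hf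
  set c : ℂ := star v₁ ⬝ᵥ ρ.mulVec v₂ with hc
  -- Step 1: swap the finite sums with the integral
  have step1 : star v₁ ⬝ᵥ (gaussTimeAverage σ H ρ).mulVec v₂
      = ∫ t : ℝ, ∑ i, ∑ j, (star v₁ i * v₂ j) * f i j t := by
    have hint : ∀ (i : Fin N), Integrable (fun t => ∑ j, (star v₁ i * v₂ j) * f i j t) :=
      fun i => integrable_finset_sum _ fun j _ =>
        ((integrable_gauss_entry σ hσ H ρ i j).const_mul _)
    rw [integral_finset_sum Finset.univ fun i _ => hint i]
    simp only [dotProduct, Matrix.mulVec, gaussTimeAverage, Matrix.of_apply]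
    refine Finset.sum_congr rfl fun i _ => ?_
    rw [integral_finset_sum Finset.univ fun j _ =>
      ((integrable_gauss_entry σ hσ H ρ i j).const_mul _)]
    rw [Finset.mul_sum]
    refine Finset.sum_congr rfl fun j _ => ?_
    rw [show ∀ z : ℂ, star v₁ i * (z * v₂ j) = (star v₁ i * v₂ j) * z from fun z => by ring,
      ← integral_const_mul]
  -- Step 2: pointwise evaluation of the integrand
  have step2 : ∀ t : ℝ, ∑ i, ∑ j, (star v₁ i * v₂ j) * f i j t
      = ((gaussDensity σ t : ℂ) * Complex.exp (Complex.I * ((e₂ - e₁ : ℝ) : ℂ) * (t : ℂ))) * c := by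
    intro t
    have hsum : ∑ i, ∑ j, (star v₁ i * v₂ j) * f i j t
        = (gaussDensity σ t : ℂ) * (star v₁ ⬝ᵥ (A t).mulVec v₂) := by
      simp only [dotProduct, Matrix.mulVec, Finset.mul_sum]
      refine Finset.sum_congr rfl fun i _ => Finset.sum_congr rfl fun j _ => by
        simp [hf]; ring
    rw [hsum]
    -- eigenvector computations
    have hp : ((Complex.I * (t : ℂ)) • H).mulVec v₂ = (Complex.I * t * e₂) • v₂ := by
      rw [Matrix.smul_mulVec, hv₂, smul_smul]
    have hexp2 : (NormedSpace.exp ((Complex.I * (t : ℂ)) • H)).mulVec v₂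
        = Complex.exp (Complex.I * t * e₂) • v₂ := expMulVec _ _ _ hp
    have hp1 : ((Complex.I * (t : ℂ)) • H).mulVec v₁ = (Complex.I * t * e₁) • v₁ := by
      rw [Matrix.smul_mulVec, hv₁, smul_smul]
    have hexp1 : (NormedSpace.exp ((Complex.I * (t : ℂ)) • H)).mulVec v₁
        = Complex.exp (Complex.I * t * e₁) • v₁ := expMulVec _ _ _ hp1
    have hconj : (NormedSpace.exp ((-(Complex.I * (t : ℂ))) • H))ᴴ
        = NormedSpace.exp ((Complex.I * (t : ℂ)) • H) := by
      rw [← Matrix.exp_conjTranspose]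
      congr 1
      rw [Matrix.conjTranspose_smul, hH]
      congr 1
      simp
    have hAv : star v₁ ⬝ᵥ (A t).mulVec v₂
        = Complex.exp (Complex.I * t * e₂) * (starRingEnd ℂ) (Complex.exp (Complex.I * t * e₁)) * c := by
      rw [hA]
      simp only
      rw [← Matrix.mulVec_mulVec, ← Matrix.mulVec_mulVec, hexp2, Matrix.mulVec_smul,
        Matrix.mulVec_smul, dotProduct_smul, dot_shift, hconj, hexp1, star_smul,
        smul_dotProduct]
      rw [hc]
      simp only [smul_eq_mul, RCLike.star_def]
      ring
    rw [hAv]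
    have : Complex.exp (Complex.I * t * e₂) * (starRingEnd ℂ) (Complex.exp (Complex.I * t * e₁))
        = Complex.exp (Complex.I * ((e₂ - e₁ : ℝ) : ℂ) * (t : ℂ)) := by
      rw [← Complex.exp_conj, ← Complex.exp_add]
      congr 1
      have : (starRingEnd ℂ) (Complex.I * t * e₁) = -(Complex.I * t * e₁) := by
        simp only [map_mul, Complex.conj_I, Complex.conj_ofReal]
        ring
      rw [this]
      push_cast
      ring
    rw [this]
    ring
  rw [step1, integral_congr_ae (Filter.Eventually.of_forall step2), integral_mul_const,
    gauss_char σ hσ (e₂ - e₁)]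
  rw [norm_mul]
  have habs1 : ‖((Real.exp (-(σ ^ 2 * (e₂ - e₁) ^ 2) / 2) : ℝ) : ℂ)‖
      = Real.exp (-(σ ^ 2 * (e₁ - e₂) ^ 2) / 2) := by
    rw [Complex.norm_real, Real.norm_eq_abs, abs_of_pos (Real.exp_pos _)]
    ring_nf
  rw [habs1]
  calc Real.exp (-(σ ^ 2 * (e₁ - e₂) ^ 2) / 2) * ‖c‖
      ≤ Real.exp (-(σ ^ 2 * (e₁ - e₂) ^ 2) / 2) * 1 := by
        gcongr
        exact coherence_abs_le ρ hρ hρtr v₁ v₂ hv₁unit hv₂unit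
    _ = _ := mul_one _
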